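/- arXiv:1511.07268 — 4 statements merged into one kernel-verified Lean document; each statement's English description precedes it below -/
import Mathlib

section
/- For every positive integer n, all π, ρ ∈ Sym_n, and every integer 0 ≤ r ≤ n, the toric maps satisfy f̄_r(ρ∘π) = f̄_r(ρ) ∘ f̄_s(π), where s = ρ⁻¹(r) (interpreting ρ⁻¹(0) = 0 and f̄_0 as the identity map). In particular, f̄ is a skew-morphism of the group Sym_n with power function π ↦ π⁻¹(1). -/
open Fin.NatCast

def ext0 {n : ℕ} (π : Equiv.Perm (Fin n)) : Equiv.Perm (Fin (n + 1)) where
  toFun x := Fin.cases 0 (fun t => (π t).succ) x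
  invFun x := Fin.cases 0 (fun t => (π⁻¹ t).succ) x
  left_inv x := by
    cases x using Fin.cases with
    | zero => simp
    | succ t => simp
  right_inv x := by
    cases x using Fin.cases with
    | zero => simp
    | succ t => simp

theorem ext0_zero {n : ℕ} (π : Equiv.Perm (Fin n)) : ext0 π 0 = 0 := by
  simp [ext0]

theorem finRotate_pow_apply {n : ℕ} (m : ℕ) (x : Fin (n + 1)) :
    ((finRotate (n + 1)) ^ m) x = x + (m : Fin (n + 1)) := by
  induction m with
  | zero => simp
  | succ m ih =>
      rw [pow_succ', Equiv.Perm.mul_apply, finRotate_succ_apply, ih]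
      push_cast
      simp only [Nat.cast_succ, add_assoc]

/-- The auxiliary permutation `α^(n+1-r) ∘ [0 π] ∘ α^(π⁻¹(r))` of `{0,1,…,n}`. -/
def toricAux (n r : ℕ) (π : Equiv.Perm (Fin n)) : Equiv.Perm (Fin (n + 1)) :=
  (finRotate (n + 1)) ^ (n + 1 - r) * ext0 π *
    (finRotate (n + 1)) ^ (((ext0 π)⁻¹ (r : Fin (n + 1))) : ℕ)

theorem toricAux_apply_zero (n r : ℕ) (hr : r ≤ n) (π : Equiv.Perm (Fin n)) :
    toricAux n r π 0 = 0 := by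
  unfold toricAux
  have h : r + (n + 1 - r) = n + 1 := by omega
  rw [Equiv.Perm.mul_apply, Equiv.Perm.mul_apply, finRotate_pow_apply,
    finRotate_pow_apply, zero_add, Fin.cast_val_eq_self,
    ← Equiv.Perm.mul_apply, mul_inv_cancel, Equiv.Perm.one_apply, ← Nat.cast_add, h, Fin.natCast_self]

/-- Restriction of a permutation of `{0,1,…,n}` fixing `0` to a permutation of `{1,…,n}`. -/
def unext0 {n : ℕ} (τ : Equiv.Perm (Fin (n + 1))) (h : τ 0 = 0) : Equiv.Perm (Fin n) where
  toFun t := (τ t.succ).pred (by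
    intro hc
    exact Fin.succ_ne_zero t (τ.injective (hc.trans h.symm)))
  invFun t := (τ⁻¹ t.succ).pred (by
    intro hc
    have h' : τ⁻¹ 0 = 0 := by
      conv_lhs => rw [← h]
      exact τ.symm_apply_apply 0
    exact Fin.succ_ne_zero t (τ⁻¹.injective (hc.trans h'.symm)))
  left_inv t := by
    apply Fin.succ_injective
    rw [Fin.succ_pred, Fin.succ_pred]
    exact τ.symm_apply_apply _
  right_inv t := by
    apply Fin.succ_injective
    rw [Fin.succ_pred, Fin.succ_pred]
    exact τ.apply_symm_apply _

/-- The toric map `f̄_r` on `Sym_n`. -/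
def toricMap (n r : ℕ) (hr : r ≤ n) (π : Equiv.Perm (Fin n)) : Equiv.Perm (Fin n) :=
  unext0 (toricAux n r π) (toricAux_apply_zero n r hr π)

theorem perm_apply_inv_self {α : Type*} (f : Equiv.Perm α) (x : α) : f (f⁻¹ x) = x :=
  f.apply_symm_apply x


theorem finRotate_pow_self (n : ℕ) : (finRotate (n + 1)) ^ (n + 1) = 1 := by
  ext x
  simp [finRotate_pow_apply]

theorem ext0_inv_zero {n : ℕ} (π : Equiv.Perm (Fin n)) : (ext0 π)⁻¹ 0 = 0 := by
  apply (ext0 π).injective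
  rw [perm_apply_inv_self, ext0_zero]

theorem ext0_mul {n : ℕ} (ρ π : Equiv.Perm (Fin n)) :
    ext0 (ρ * π) = ext0 ρ * ext0 π := by
  ext x
  cases x using Fin.cases with
  | zero => simp [ext0]
  | succ t => simp [ext0]

theorem ext0_injective {n : ℕ} : Function.Injective (ext0 (n := n)) := by
  intro σ τ h
  ext t
  have h2 := congrArg (fun e : Equiv.Perm (Fin (n+1)) => e t.succ) h
  simp only [ext0, Equiv.coe_fn_mk, Fin.cases_succ] at h2
  exact congrArg Fin.val (Fin.succ_injective _ h2)

theorem ext0_unext0 {n : ℕ} (τ : Equiv.Perm (Fin (n + 1))) (h : τ 0 = 0) :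
    ext0 (unext0 τ h) = τ := by
  ext x
  cases x using Fin.cases with
  | zero => rw [ext0_zero, h]
  | succ t => simp [ext0, unext0]

theorem finRotate_pow_val_mul {n : ℕ} (u v : Fin (n + 1)) :
    (finRotate (n + 1)) ^ (u : ℕ) * (finRotate (n + 1)) ^ (v : ℕ)
      = (finRotate (n + 1)) ^ ((u + v : Fin (n + 1)) : ℕ) := by
  ext w
  simp only [Equiv.Perm.mul_apply, finRotate_pow_apply, Fin.cast_val_eq_self]
  rw [add_assoc, add_comm v u]

theorem toricAux_mul (n r : ℕ) (ρ π : Equiv.Perm (Fin n)) :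
    toricAux n r (ρ * π)
      = toricAux n r ρ * toricAux n (((ext0 ρ)⁻¹ (r : Fin (n + 1))).val) π := by
  have hs : (((((ext0 ρ)⁻¹ (r : Fin (n + 1))).val : ℕ)) : Fin (n + 1))
      = (ext0 ρ)⁻¹ (r : Fin (n + 1)) := Fin.cast_val_eq_self _
  unfold toricAux
  rw [ext0_mul, hs]
  have hinv : (ext0 ρ * ext0 π)⁻¹ (r : Fin (n + 1))
      = (ext0 π)⁻¹ ((ext0 ρ)⁻¹ (r : Fin (n + 1))) := by
    rw [mul_inv_rev, Equiv.Perm.mul_apply]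
  rw [hinv]
  have h1 : (finRotate (n + 1)) ^ (((ext0 ρ)⁻¹ (r : Fin (n + 1))).val)
      * (finRotate (n + 1)) ^ (n + 1 - ((ext0 ρ)⁻¹ (r : Fin (n + 1))).val) = 1 := by
    rw [← pow_add]
    have h2 : ((ext0 ρ)⁻¹ (r : Fin (n + 1))).val + (n + 1 - ((ext0 ρ)⁻¹ (r : Fin (n + 1))).val)
        = n + 1 := by
      have := ((ext0 ρ)⁻¹ (r : Fin (n + 1))).is_lt; omega
    rw [h2, finRotate_pow_self]
  simp only [mul_assoc]
  rw [← mul_assoc ((finRotate (n + 1)) ^ (((ext0 ρ)⁻¹ (r : Fin (n + 1))).val)), h1, one_mul]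

theorem toricAux_zero (n : ℕ) (π : Equiv.Perm (Fin n)) : toricAux n 0 π = ext0 π := by
  unfold toricAux
  rw [Nat.cast_zero, ext0_inv_zero, Nat.sub_zero, finRotate_pow_self, one_mul]
  simp

theorem toricMap_zero (n : ℕ) (π : Equiv.Perm (Fin n)) :
    toricMap n 0 (Nat.zero_le n) π = π := by
  apply ext0_injective
  rw [show toricMap n 0 (Nat.zero_le n) π = unext0 (toricAux n 0 π) (toricAux_apply_zero n 0 (Nat.zero_le n) π) from rfl,
    ext0_unext0, toricAux_zero]

theorem toricAux_succ (n r : ℕ) (hr : r < n) (π : Equiv.Perm (Fin n)) :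
    toricAux n 1 (toricMap n r (le_of_lt hr) π) = toricAux n (r + 1) π := by
  have hτ : ext0 (toricMap n r (le_of_lt hr) π) = toricAux n r π :=
    ext0_unext0 _ _
  have hcast : (((r : ℕ) + 1 : ℕ) : Fin (n + 1)) = (r : Fin (n + 1)) + 1 := by
    exact Nat.cast_succ r
  have hzero : (r : Fin (n + 1)) + (((n + 1 - r : ℕ)) : Fin (n + 1)) = 0 := by
    rw [← Nat.cast_add, show r + (n + 1 - r) = n + 1 by omega, Fin.natCast_self]
  have key : (toricAux n r π)⁻¹ ((1 : ℕ) : Fin (n + 1))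
      = (ext0 π)⁻¹ ((r : Fin (n + 1)) + 1) - (ext0 π)⁻¹ (r : Fin (n + 1)) := by
    apply (toricAux n r π).injective
    rw [perm_apply_inv_self]
    unfold toricAux
    simp only [Equiv.Perm.mul_apply, finRotate_pow_apply, Fin.cast_val_eq_self]
    rw [sub_add_cancel, perm_apply_inv_self, Nat.cast_one, add_right_comm, hzero, zero_add]
  conv_lhs => rw [show toricAux n 1 (toricMap n r (le_of_lt hr) π)
    = (finRotate (n + 1)) ^ (n + 1 - 1) * ext0 (toricMap n r (le_of_lt hr) π) *
      (finRotate (n + 1)) ^ (((ext0 (toricMap n r (le_of_lt hr) π))⁻¹ ((1 : ℕ) : Fin (n + 1))).val) from rfl]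
  rw [hτ, key]
  show (finRotate (n+1)) ^ n * ((finRotate (n+1)) ^ (n+1-r) * ext0 π *
      (finRotate (n+1)) ^ (((ext0 π)⁻¹ (r : Fin (n+1))).val)) * _ = _
  unfold toricAux
  rw [hcast]
  have hfront : (finRotate (n + 1)) ^ n * (finRotate (n + 1)) ^ (n + 1 - r)
      = (finRotate (n + 1)) ^ (n + 1 - (r + 1)) := by
    rw [← pow_add, show n + (n + 1 - r) = (n + 1 - (r + 1)) + (n + 1) by omega,
      pow_add, finRotate_pow_self, mul_one]
  have htail : (finRotate (n + 1)) ^ (((ext0 π)⁻¹ (r : Fin (n + 1))).val) *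
      (finRotate (n + 1)) ^ ((((ext0 π)⁻¹ ((r : Fin (n + 1)) + 1) - (ext0 π)⁻¹ (r : Fin (n + 1)))).val)
      = (finRotate (n + 1)) ^ (((ext0 π)⁻¹ ((r : Fin (n + 1)) + 1)).val) := by
    have hadd : (ext0 π)⁻¹ (r : Fin (n + 1)) +
        ((ext0 π)⁻¹ ((r : Fin (n + 1)) + 1) - (ext0 π)⁻¹ (r : Fin (n + 1)))
        = (ext0 π)⁻¹ ((r : Fin (n + 1)) + 1) := by
      abel
    rw [finRotate_pow_val_mul, hadd]
  calc (finRotate (n+1)) ^ n * ((finRotate (n+1)) ^ (n+1-r) * ext0 π *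
        (finRotate (n+1)) ^ (((ext0 π)⁻¹ (r : Fin (n+1))).val)) *
        (finRotate (n+1)) ^ ((((ext0 π)⁻¹ ((r : Fin (n+1)) + 1) - (ext0 π)⁻¹ (r : Fin (n+1)))).val)
      = ((finRotate (n+1)) ^ n * (finRotate (n+1)) ^ (n+1-r)) * ext0 π *
        ((finRotate (n+1)) ^ (((ext0 π)⁻¹ (r : Fin (n+1))).val) *
         (finRotate (n+1)) ^ ((((ext0 π)⁻¹ ((r : Fin (n+1)) + 1) - (ext0 π)⁻¹ (r : Fin (n+1)))).val)) := by
        simp only [mul_assoc]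
    _ = _ := by rw [hfront, htail]

theorem toricMap_iterate (n : ℕ) (hn : 1 ≤ n) :
    ∀ (s : ℕ) (hs : s ≤ n) (π : Equiv.Perm (Fin n)),
      toricMap n s hs π = (toricMap n 1 hn)^[s] π := by
  intro s
  induction s with
  | zero => intro hs π; simpa using toricMap_zero n π
  | succ s ih =>
      intro hs π
      have hs' : s < n := by omega
      have h1 : toricMap n (s + 1) hs π
          = toricMap n 1 hn (toricMap n s (le_of_lt hs') π) := by
        apply ext0_injective
        simp only [toricMap, ext0_unext0]
        exact (toricAux_succ n s hs' π).symm
      rw [h1, ih (le_of_lt hs'), Function.iterate_succ_apply']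

theorem stmt_7' (n : ℕ) (hn : 1 ≤ n) :
    (∀ (r : ℕ) (hr : r ≤ n) (ρ π : Equiv.Perm (Fin n)),
      toricMap n r hr (ρ * π)
        = toricMap n r hr ρ *
            toricMap n (((ext0 ρ)⁻¹ (r : Fin (n + 1))).val)
              (Nat.lt_succ_iff.mp (Fin.is_lt _)) π) ∧
    (∀ ρ π : Equiv.Perm (Fin n),
      toricMap n 1 hn (ρ * π)
        = toricMap n 1 hn ρ *
            (toricMap n 1 hn)^[((ext0 ρ)⁻¹ ((1 : ℕ) : Fin (n + 1))).val] π) := by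
  have H : ∀ (r : ℕ) (hr : r ≤ n) (ρ π : Equiv.Perm (Fin n)),
      toricMap n r hr (ρ * π)
        = toricMap n r hr ρ *
            toricMap n (((ext0 ρ)⁻¹ (r : Fin (n + 1))).val)
              (Nat.lt_succ_iff.mp (Fin.is_lt _)) π := by
    intro r hr ρ π
    apply ext0_injective
    simp only [toricMap, ext0_mul, ext0_unext0]
    exact toricAux_mul n r ρ π
  refine ⟨H, fun ρ π => ?_⟩
  rw [H 1 hn ρ π, toricMap_iterate n hn _ (Nat.lt_succ_iff.mp (Fin.is_lt _)) π]


/-- For every positive `n`, all `π, ρ ∈ Sym_n` and `0 ≤ r ≤ n`,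
`f̄_r(ρ∘π) = f̄_r(ρ) ∘ f̄_s(π)` where `s = ρ⁻¹(r)` (with `ρ⁻¹(0) = 0`).
In particular, `f̄` is a skew-morphism of `Sym_n` with power function `π ↦ π⁻¹(1)`. -/
theorem stmt_7 (n : ℕ) (hn : 1 ≤ n) :
    (∀ (r : ℕ) (hr : r ≤ n) (ρ π : Equiv.Perm (Fin n)),
      toricMap n r hr (ρ * π)
        = toricMap n r hr ρ *
            toricMap n (((ext0 ρ)⁻¹ (r : Fin (n + 1))).val)
              (Nat.lt_succ_iff.mp (Fin.is_lt _)) π) ∧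
    (∀ ρ π : Equiv.Perm (Fin n),
      toricMap n 1 hn (ρ * π)
        = toricMap n 1 hn ρ *
            (toricMap n 1 hn)^[((ext0 ρ)⁻¹ ((1 : ℕ) : Fin (n + 1))).val] π) := by
  exact stmt_7' n hn
end

section
/- For every positive integer n, no edge of Cay(Sym_n, T_n) has one endpoint in B and the other in S^∆: for every σ ∈ B and every τ ∈ S^∆, the permutation σ⁻¹∘τ is not a block transposition. -/
/-- Auxiliary function: the action of the block transposition with cut points
`(i,j,k)` on `{1,…,n}`, written 1-based. -/
def btFun (i j k t : ℕ) : ℕ :=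
  if t ≤ i ∨ k < t then t
  else if t ≤ k - j + i then t + j - i
  else t + j - k

theorem btFun_lb {i j k t : ℕ} (h1 : 1 ≤ t) : 1 ≤ btFun i j k t := by
  unfold btFun; split_ifs <;> omega

theorem btFun_ub {i j k t n : ℕ} (ht : t ≤ n) (hjk : j ≤ k) (hkn : k ≤ n) :
    btFun i j k t ≤ n := by
  unfold btFun; split_ifs <;> omega

theorem btFun_inv {i j k : ℕ} (hij : i < j) (hjk : j < k) (t : ℕ) :
    btFun i (k - j + i) k (btFun i j k t) = t := by
  unfold btFun; split_ifs <;> omega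

theorem btFun_inv' {i j k : ℕ} (hij : i < j) (hjk : j < k) (t : ℕ) :
    btFun i j k (btFun i (k - j + i) k t) = t := by
  have h := btFun_inv (i := i) (j := k - j + i) (k := k) (by omega) (by omega) t
  have e : k - (k - j + i) + i = j := by omega
  rwa [e] at h

/-- The block transposition `σ(i,j,k)` as a permutation of `Fin n`,
where `t : Fin n` encodes the element `t.val + 1` of `{1,…,n}`. -/
def blockT (n i j k : ℕ) (hij : i < j) (hjk : j < k) (hkn : k ≤ n) :
    Equiv.Perm (Fin n) where
  toFun t := ⟨btFun i j k (t.1 + 1) - 1, by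
    have h0 := t.isLt
    have h1 := btFun_lb (i := i) (j := j) (k := k) (t := t.1 + 1) (by omega)
    have h2 := btFun_ub (i := i) (j := j) (k := k) (t := t.1 + 1) (n := n)
      (by omega) (by omega) hkn
    omega⟩
  invFun t := ⟨btFun i (k - j + i) k (t.1 + 1) - 1, by
    have h0 := t.isLt
    have h1 := btFun_lb (i := i) (j := k - j + i) (k := k) (t := t.1 + 1) (by omega)
    have h2 := btFun_ub (i := i) (j := k - j + i) (k := k) (t := t.1 + 1) (n := n)
      (by omega) (by omega) hkn
    omega⟩
  left_inv t := by
    have h1 := btFun_lb (i := i) (j := j) (k := k) (t := t.1 + 1) (by omega)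
    have h2 := btFun_inv hij hjk (t.1 + 1)
    apply Fin.ext
    simp only
    have h3 : btFun i j k (t.1 + 1) - 1 + 1 = btFun i j k (t.1 + 1) := by omega
    rw [h3, h2]
    omega
  right_inv t := by
    have h1 := btFun_lb (i := i) (j := k - j + i) (k := k) (t := t.1 + 1) (by omega)
    have h2 := btFun_inv' hij hjk (t.1 + 1)
    apply Fin.ext
    simp only
    have h3 : btFun i (k - j + i) k (t.1 + 1) - 1 + 1 = btFun i (k - j + i) k (t.1 + 1) := by
      omega
    rw [h3, h2]
    omega

/-- `T_n`: the set of all block transpositions on `{1,…,n}`. -/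
def blockTranspositions (n : ℕ) : Set (Equiv.Perm (Fin n)) :=
  {π | ∃ (i j k : ℕ) (hij : i < j) (hjk : j < k) (hkn : k ≤ n),
      blockT n i j k hij hjk hkn = π}

theorem blockT_inv {n i j k : ℕ} (hij : i < j) (hjk : j < k) (hkn : k ≤ n) :
    (blockT n i j k hij hjk hkn)⁻¹
      = blockT n i (k - j + i) k (by omega) (by omega) hkn :=
  Equiv.ext fun _ => rfl

theorem blockTranspositions_inv_mem {n : ℕ} {π : Equiv.Perm (Fin n)}
    (h : π ∈ blockTranspositions n) : π⁻¹ ∈ blockTranspositions n := by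
  obtain ⟨i, j, k, hij, hjk, hkn, rfl⟩ := h
  exact ⟨i, k - j + i, k, by omega, by omega, hkn, (blockT_inv hij hjk hkn).symm⟩

/-- The Cayley graph `Cay(Sym_n, T_n)`. -/
def cayleyT (n : ℕ) : SimpleGraph (Equiv.Perm (Fin n)) where
  Adj π ρ := π ≠ ρ ∧ π⁻¹ * ρ ∈ blockTranspositions n
  symm := by
    constructor
    rintro π ρ ⟨hne, hmem⟩
    refine ⟨hne.symm, ?_⟩
    have h := blockTranspositions_inv_mem hmem
    rwa [mul_inv_rev, inv_inv] at h
  loopless := ⟨fun π h => h.1 rfl⟩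

/-- `B`: the set of block transpositions `σ(0,j,n)`, `1 ≤ j ≤ n-1`. -/
def Bset (n : ℕ) : Set (Equiv.Perm (Fin n)) :=
  {π | ∃ (j : ℕ) (h1 : 0 < j) (h2 : j < n), blockT n 0 j n h1 h2 le_rfl = π}

/-- `S^∆`: the block transpositions `σ(i,j,k)` with `i ≠ 0` and `k ≠ n`. -/
def Sset (n : ℕ) : Set (Equiv.Perm (Fin n)) :=
  {π | ∃ (i j k : ℕ) (hij : i < j) (hjk : j < k) (hkn : k ≤ n),
      i ≠ 0 ∧ k ≠ n ∧ blockT n i j k hij hjk hkn = π}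

/-- `L`: the block transpositions `σ(0,j,k)` with `k ≠ n`. -/
def Lset (n : ℕ) : Set (Equiv.Perm (Fin n)) :=
  {π | ∃ (j k : ℕ) (hij : 0 < j) (hjk : j < k) (hkn : k ≤ n),
      k ≠ n ∧ blockT n 0 j k hij hjk hkn = π}

/-- `F`: the block transpositions `σ(i,j,n)` with `i ≠ 0`. -/
def Fset (n : ℕ) : Set (Equiv.Perm (Fin n)) :=
  {π | ∃ (i j : ℕ) (hij : i < j) (hjn : j < n),
      i ≠ 0 ∧ blockT n i j n hij hjn le_rfl = π}


/-- No edge of `Cay(Sym_n, T_n)` has one endpoint in `B` and the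
other in `S^∆`. -/
theorem stmt_11 (n : ℕ) (hn : 1 ≤ n) :
    ∀ σ ∈ Bset n, ∀ τ ∈ Sset n, σ⁻¹ * τ ∉ blockTranspositions n := by
  rintro σ ⟨j, hj1, hj2, rfl⟩ τ ⟨i', j', k', hij', hjk', hkn', hi0, hkN, rfl⟩
  rintro ⟨a, b, c, hab, hbc, hcn, heq⟩
  have hτ : blockT n 0 j n hj1 hj2 le_rfl * blockT n a b c hab hbc hcn
      = blockT n i' j' k' hij' hjk' hkn' := by
    rw [heq, mul_inv_cancel_left]
  have key : ∀ t, 1 ≤ t → t ≤ n →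
      btFun 0 j n (btFun a b c t) = btFun i' j' k' t := by
    intro t h1 h2
    have hvl := congrArg (fun π : Equiv.Perm (Fin n) => (π ⟨t - 1, by omega⟩).1) hτ
    have hap : ∀ (i j k : ℕ) (hij : i < j) (hjk : j < k) (hkn : k ≤ n) (x : Fin n),
        ((blockT n i j k hij hjk hkn) x).1 = btFun i j k (x.1 + 1) - 1 := fun _ _ _ _ _ _ _ => rfl
    simp only [Equiv.Perm.mul_apply, hap] at hvl
    rw [Nat.sub_add_cancel h1] at hvl
    have hb1 : 1 ≤ btFun a b c t := btFun_lb h1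
    rw [Nat.sub_add_cancel hb1] at hvl
    have hb2 : 1 ≤ btFun 0 j n (btFun a b c t) := btFun_lb hb1
    have hb3 : 1 ≤ btFun i' j' k' t := btFun_lb h1
    omega
  have E1 := key 1 le_rfl hn
  have E2 := key n hn le_rfl
  have E3 := key (i' + 1) (by omega) (by omega)
  have hab0 : a = 0 ∧ b = n - j := by
    clear E2 E3
    unfold btFun at E1
    split_ifs at E1 <;> omega
  obtain ⟨ha, hb⟩ := hab0
  subst ha hb
  have hc : c = n := by
    clear E1 E3
    unfold btFun at E2
    split_ifs at E2 <;> omega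
  rw [hc] at E3
  have hinv := btFun_inv' (i := 0) (j := j) (k := n) hj1 hj2 (i' + 1)
  rw [Nat.add_zero] at hinv
  rw [hinv] at E3
  unfold btFun at E3
  split_ifs at E3 <;> omega
end

section
/- Let n ≥ 4. In the block transposition graph Γ: every vertex in L ∪ F has exactly one neighbor in B; every vertex in B has exactly n-2 neighbors in L ∪ F; every vertex in F has exactly one neighbor in L; and every vertex in L has exactly one neighbor in F. -/
theorem btFun_cases {a b c : ℕ} (hab : a < b) (hbc : b < c) (t : ℕ) :
    (t ≤ a ∧ btFun a b c t = t) ∨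
    (a < t ∧ t ≤ c - b + a ∧ btFun a b c t = t + b - a) ∨
    (c - b + a < t ∧ t ≤ c ∧ btFun a b c t = t + b - c) ∨
    (c < t ∧ btFun a b c t = t) := by
  unfold btFun; split_ifs <;> omega

theorem blockT_apply_val {n : ℕ} (i j k : ℕ) (hij : i < j) (hjk : j < k)
    (hkn : k ≤ n) (t : Fin n) :
    ((blockT n i j k hij hjk hkn) t).1 = btFun i j k (t.1 + 1) - 1 := rfl

theorem blockT_eq_iff {n i j k a b c : ℕ}
    (hij : i < j) (hjk : j < k) (hkn : k ≤ n)
    (hab : a < b) (hbc : b < c) (hcn : c ≤ n) :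
    blockT n i j k hij hjk hkn = blockT n a b c hab hbc hcn
    ↔ ∀ t, 1 ≤ t → t ≤ n → btFun i j k t = btFun a b c t := by
  constructor
  · intro h t h1 h2
    have hv := congrArg Fin.val (Equiv.congr_fun h ⟨t - 1, by omega⟩)
    rw [blockT_apply_val, blockT_apply_val] at hv
    simp only at hv
    have e1 : t - 1 + 1 = t := by omega
    rw [e1] at hv
    have l2 : 1 ≤ btFun i j k t := btFun_lb (by omega)
    have l3 : 1 ≤ btFun a b c t := btFun_lb (by omega)
    omega
  · intro H
    apply Equiv.ext
    intro t
    apply Fin.ext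
    rw [blockT_apply_val, blockT_apply_val, H (t.1+1) (by omega) (by omega)]

theorem blockT_mul_eq_iff {n i j k a b c x y z : ℕ}
    (hij : i < j) (hjk : j < k) (hkn : k ≤ n)
    (hab : a < b) (hbc : b < c) (hcn : c ≤ n)
    (hxy : x < y) (hyz : y < z) (hzn : z ≤ n) :
    blockT n i j k hij hjk hkn * blockT n a b c hab hbc hcn
      = blockT n x y z hxy hyz hzn
    ↔ ∀ t, 1 ≤ t → t ≤ n → btFun i j k (btFun a b c t) = btFun x y z t := by
  constructor
  · intro h t h1 h2
    have hv := congrArg Fin.val (Equiv.congr_fun h ⟨t - 1, by omega⟩)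
    rw [Equiv.Perm.mul_apply, blockT_apply_val, blockT_apply_val,
      blockT_apply_val] at hv
    have e1 : t - 1 + 1 = t := by omega
    rw [e1] at hv
    have l1 : 1 ≤ btFun a b c t := btFun_lb (by omega)
    have e2 : btFun a b c t - 1 + 1 = btFun a b c t := by omega
    rw [e2] at hv
    have l2 : 1 ≤ btFun i j k (btFun a b c t) := btFun_lb (by omega)
    have l3 : 1 ≤ btFun x y z t := btFun_lb (by omega)
    omega
  · intro H
    apply Equiv.ext
    intro t
    apply Fin.ext
    rw [Equiv.Perm.mul_apply, blockT_apply_val, blockT_apply_val, blockT_apply_val]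
    have l1 : 1 ≤ btFun a b c (t.1+1) := btFun_lb (by omega)
    have e2 : btFun a b c (t.1+1) - 1 + 1 = btFun a b c (t.1+1) := by omega
    rw [e2, H (t.1+1) (by omega) (by omega)]

theorem blockT_inj {n i j k a b c : ℕ}
    {hij : i < j} {hjk : j < k} {hkn : k ≤ n}
    {hab : a < b} {hbc : b < c} {hcn : c ≤ n}
    (h : blockT n i j k hij hjk hkn = blockT n a b c hab hbc hcn) :
    i = a ∧ j = b ∧ k = c := by
  rw [blockT_eq_iff hij hjk hkn hab hbc hcn] at h
  have p1 := h (i+1) (by omega) (by omega)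
  have p2 := h (a+1) (by omega) (by omega)
  have p3 := h k (by omega) (by omega)
  have p4 := h c (by omega) (by omega)
  have c1 := btFun_cases hij hjk (i+1)
  have c2 := btFun_cases hab hbc (i+1)
  have c3 := btFun_cases hij hjk (a+1)
  have c4 := btFun_cases hab hbc (a+1)
  have c5 := btFun_cases hij hjk k
  have c6 := btFun_cases hab hbc k
  have c7 := btFun_cases hij hjk c
  have c8 := btFun_cases hab hbc c
  omega
theorem memT {n i j k : ℕ} (hij : i < j) (hjk : j < k) (hkn : k ≤ n) :
    blockT n i j k hij hjk hkn ∈ blockTranspositions n :=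
  ⟨i, j, k, hij, hjk, hkn, rfl⟩

theorem adjsymm {n : ℕ} {σ τ : Equiv.Perm (Fin n)}
    (h : σ⁻¹ * τ ∈ blockTranspositions n) : τ⁻¹ * σ ∈ blockTranspositions n := by
  have h2 := blockTranspositions_inv_mem h
  rwa [mul_inv_rev, inv_inv] at h2

theorem adj_of_mul_eq {n : ℕ} {σ τ ρ : Equiv.Perm (Fin n)} (h : σ * ρ = τ)
    (hρ : ρ ∈ blockTranspositions n) : σ⁻¹ * τ ∈ blockTranspositions n := by
  rw [← h, inv_mul_cancel_left]; exact hρ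

theorem adj_pointwise {n i j k x y z : ℕ} (hij : i < j) (hjk : j < k) (hkn : k ≤ n)
    (hxy : x < y) (hyz : y < z) (hzn : z ≤ n)
    (h : (blockT n i j k hij hjk hkn)⁻¹ * blockT n x y z hxy hyz hzn
      ∈ blockTranspositions n) :
    ∃ a b c, a < b ∧ b < c ∧ c ≤ n ∧
      ∀ t, 1 ≤ t → t ≤ n →
        btFun i (k - j + i) k (btFun x y z t) = btFun a b c t := by
  obtain ⟨a, b, c, hab, hbc, hcn, he⟩ := h
  refine ⟨a, b, c, hab, hbc, hcn, ?_⟩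
  have h2 : blockT n i (k - j + i) k (by omega) (by omega) hkn
      * blockT n x y z hxy hyz hzn = blockT n a b c hab hbc hcn := by
    rw [← blockT_inv hij hjk hkn]
    exact he.symm
  exact (blockT_mul_eq_iff (by omega) (by omega) hkn hxy hyz hzn hab hbc hcn).mp h2

/-- Identity: `σ(0,j,k) ∘ σ(k-j,k,n) = σ(0,j,n)`. -/
theorem idE1 {n j k : ℕ} (hj : 0 < j) (hjk : j < k) (hkn : k < n) :
    blockT n 0 j k hj hjk (le_of_lt hkn)
      * blockT n (k - j) k n (by omega) hkn le_rfl
      = blockT n 0 j n hj (by omega) le_rfl := by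
  refine (blockT_mul_eq_iff _ _ _ _ _ _ _ _ _).mpr ?_
  intro t h1 h2
  have c1 := btFun_cases (show k - j < k by omega) hkn t
  have c2 := btFun_cases hj hjk (btFun (k - j) k n t)
  have c3 := btFun_cases hj (show j < n by omega) t
  omega

/-- Identity: `σ(i,j,n) ∘ σ(0,i,n-j+i) = σ(0,j,n)`. -/
theorem idE2 {n i j : ℕ} (hi : 0 < i) (hij : i < j) (hjn : j < n) :
    blockT n i j n hij hjn le_rfl
      * blockT n 0 i (n - j + i) hi (by omega) (by omega)
      = blockT n 0 j n (by omega) hjn le_rfl := by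
  refine (blockT_mul_eq_iff _ _ _ _ _ _ _ _ _).mpr ?_
  intro t h1 h2
  have c1 := btFun_cases hi (show i < n - j + i by omega) t
  have c2 := btFun_cases hij hjn (btFun 0 i (n - j + i) t)
  have c3 := btFun_cases (show (0:ℕ) < j by omega) hjn t
  omega

/-- Identity: `σ(i,j,n) ∘ σ(0,n-j+i,n) = σ(0,i,j)`. -/
theorem idE3 {n i j : ℕ} (hi : 0 < i) (hij : i < j) (hjn : j < n) :
    blockT n i j n hij hjn le_rfl
      * blockT n 0 (n - j + i) n (by omega) (by omega) le_rfl
      = blockT n 0 i j hi hij (by omega) := by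
  refine (blockT_mul_eq_iff _ _ _ _ _ _ _ _ _).mpr ?_
  intro t h1 h2
  have c1 := btFun_cases (show (0:ℕ) < n - j + i by omega) (show n - j + i < n by omega) t
  have c2 := btFun_cases hij hjn (btFun 0 (n - j + i) n t)
  have c3 := btFun_cases hi hij t
  omega
/-- Uniqueness: if `σ(0,j,k)` (k<n) is adjacent to the rotation `σ(0,m,n)`, then `m = j`. -/
theorem uniqL {n j k m a b c : ℕ} (hj : 0 < j) (hjk : j < k) (hkn : k < n)
    (hm : 0 < m) (hmn : m < n) (hab : a < b) (hbc : b < c) (hcn : c ≤ n)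
    (H : ∀ t, 1 ≤ t → t ≤ n → btFun 0 (k - j) k (btFun 0 m n t) = btFun a b c t) :
    m = j := by
  have o1 : 0 < k - j := by omega
  have o2 : k - j < k := by omega
  have ev : ∀ t, 1 ≤ t → t ≤ n → ∀ v,
      (∀ s, btFun 0 m n t = s → btFun 0 (k - j) k s = v) → btFun a b c t = v := by
    intro t h1 h2 v hv
    rw [← hv _ rfl]; exact (H t h1 h2).symm
  rcases (show m < j ∨ m = j ∨ (j < m ∧ m < k) ∨ m = k ∨ k < m by omega)
    with h | h | h | h | h
  · exfalso
    have H1 := ev (k - m) (by omega) (by omega) (k - j) (by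
      intro s hs
      have i1 := btFun_cases hm hmn (k - m)
      have o3 := btFun_cases o1 o2 s
      omega)
    have H2 := ev (k - m + 1) (by omega) (by omega) (k + 1) (by
      intro s hs
      have i1 := btFun_cases hm hmn (k - m + 1)
      have o3 := btFun_cases o1 o2 s
      omega)
    have d1 := btFun_cases hab hbc (k - m)
    have d2 := btFun_cases hab hbc (k - m + 1)
    omega
  · exact h
  · exfalso
    have H1 := ev 1 (by omega) (by omega) (1 + m - j) (by
      intro s hs
      have i1 := btFun_cases hm hmn 1
      have o3 := btFun_cases o1 o2 s
      omega)
    have H2 := ev (k - m + 1) (by omega) (by omega) (k + 1) (by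
      intro s hs
      have i1 := btFun_cases hm hmn (k - m + 1)
      have o3 := btFun_cases o1 o2 s
      omega)
    have d1 := btFun_cases hab hbc 1
    have d2 := btFun_cases hab hbc (k - m + 1)
    omega
  · exfalso
    have H1 := ev 1 (by omega) (by omega) (k + 1) (by
      intro s hs
      have i1 := btFun_cases hm hmn 1
      have o3 := btFun_cases o1 o2 s
      omega)
    have H2 := ev n (by omega) (by omega) (k - j) (by
      intro s hs
      have i1 := btFun_cases hm hmn n
      have o3 := btFun_cases o1 o2 s
      omega)
    have d1 := btFun_cases hab hbc 1
    have d2 := btFun_cases hab hbc n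
    omega
  · exfalso
    have H1 := ev (n - m + j + 1) (by omega) (by omega) 1 (by
      intro s hs
      have i1 := btFun_cases hm hmn (n - m + j + 1)
      have o3 := btFun_cases o1 o2 s
      omega)
    have H2 := ev n (by omega) (by omega) m (by
      intro s hs
      have i1 := btFun_cases hm hmn n
      have o3 := btFun_cases o1 o2 s
      omega)
    have d1 := btFun_cases hab hbc (n - m + j + 1)
    have d2 := btFun_cases hab hbc n
    omega
/-- Uniqueness: if `σ(i,j,n)` (i>0) is adjacent to the rotation `σ(0,m,n)`, then `m = j`. -/
theorem uniqF {n i j m a b c : ℕ} (hi : 0 < i) (hij : i < j) (hjn : j < n)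
    (hm : 0 < m) (hmn : m < n) (hab : a < b) (hbc : b < c) (hcn : c ≤ n)
    (H : ∀ t, 1 ≤ t → t ≤ n →
      btFun i (n - j + i) n (btFun 0 m n t) = btFun a b c t) :
    m = j := by
  have o1 : i < n - j + i := by omega
  have o2 : n - j + i < n := by omega
  have ev : ∀ t, 1 ≤ t → t ≤ n → ∀ v,
      (∀ s, btFun 0 m n t = s → btFun i (n - j + i) n s = v) → btFun a b c t = v := by
    intro t h1 h2 v hv
    rw [← hv _ rfl]; exact (H t h1 h2).symm
  rcases (show m < i ∨ m = i ∨ (i < m ∧ m < j) ∨ m = j ∨ j < m by omega)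
    with h | h | h | h | h
  · exfalso
    have H1 := ev 1 (by omega) (by omega) (1 + m) (by
      intro s hs
      have i1 := btFun_cases hm hmn 1
      have o3 := btFun_cases o1 o2 s
      omega)
    have H2 := ev (i - m + 1) (by omega) (by omega) (i + 1 + n - j) (by
      intro s hs
      have i1 := btFun_cases hm hmn (i - m + 1)
      have o3 := btFun_cases o1 o2 s
      omega)
    have d1 := btFun_cases hab hbc 1
    have d2 := btFun_cases hab hbc (i - m + 1)
    omega
  · exfalso
    have H1 := ev 1 (by omega) (by omega) (1 + i + n - j) (by
      intro s hs
      have i1 := btFun_cases hm hmn 1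
      have o3 := btFun_cases o1 o2 s
      omega)
    have H2 := ev (j - i + 1) (by omega) (by omega) (i + 1) (by
      intro s hs
      have i1 := btFun_cases hm hmn (j - i + 1)
      have o3 := btFun_cases o1 o2 s
      omega)
    have H3 := ev n (by omega) (by omega) i (by
      intro s hs
      have i1 := btFun_cases hm hmn n
      have o3 := btFun_cases o1 o2 s
      omega)
    have d1 := btFun_cases hab hbc 1
    have d2 := btFun_cases hab hbc (j - i + 1)
    have d3 := btFun_cases hab hbc n
    omega
  · exfalso
    have H1 := ev 1 (by omega) (by omega) (1 + m + n - j) (by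
      intro s hs
      have i1 := btFun_cases hm hmn 1
      have o3 := btFun_cases o1 o2 s
      omega)
    have H2 := ev (j - m + 1) (by omega) (by omega) (i + 1) (by
      intro s hs
      have i1 := btFun_cases hm hmn (j - m + 1)
      have o3 := btFun_cases o1 o2 s
      omega)
    have H3 := ev n (by omega) (by omega) (m + n - j) (by
      intro s hs
      have i1 := btFun_cases hm hmn n
      have o3 := btFun_cases o1 o2 s
      omega)
    have d1 := btFun_cases hab hbc 1
    have d2 := btFun_cases hab hbc (j - m + 1)
    have d3 := btFun_cases hab hbc n
    omega
  · exact h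
  · exfalso
    have H1 := ev (n - m + 1) (by omega) (by omega) 1 (by
      intro s hs
      have i1 := btFun_cases hm hmn (n - m + 1)
      have o3 := btFun_cases o1 o2 s
      omega)
    have H2 := ev (n - m + i + 1) (by omega) (by omega) (i + 1 + n - j) (by
      intro s hs
      have i1 := btFun_cases hm hmn (n - m + i + 1)
      have o3 := btFun_cases o1 o2 s
      omega)
    have d1 := btFun_cases hab hbc (n - m + 1)
    have d2 := btFun_cases hab hbc (n - m + i + 1)
    omega
/-- Uniqueness: if `σ(i,j,n)` (i>0) is adjacent to `σ(0,u,v)` (v<n), then `u = i` and `v = j`. -/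
theorem uniqFL {n i j u v a b c : ℕ} (hi : 0 < i) (hij : i < j) (hjn : j < n)
    (hu : 0 < u) (huv : u < v) (hvn : v < n)
    (hab : a < b) (hbc : b < c) (hcn : c ≤ n)
    (H : ∀ t, 1 ≤ t → t ≤ n →
      btFun i (n - j + i) n (btFun 0 u v t) = btFun a b c t) :
    u = i ∧ v = j := by
  have o1 : i < n - j + i := by omega
  have o2 : n - j + i < n := by omega
  have ev : ∀ t, 1 ≤ t → t ≤ n → ∀ w,
      (∀ s, btFun 0 u v t = s → btFun i (n - j + i) n s = w) → btFun a b c t = w := by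
    intro t h1 h2 w hw
    rw [← hw _ rfl]; exact (H t h1 h2).symm
  rcases (show v < i ∨ v = i ∨ (i < v ∧ v < j ∧ u ≤ i) ∨ (i < v ∧ v < j ∧ i < u) ∨
      (v = j ∧ u < i) ∨ (v = j ∧ u = i) ∨ (v = j ∧ i < u) ∨
      (j < v ∧ u ≤ i) ∨ (j < v ∧ i < u) by omega)
    with h | h | h | h | h | h | h | h | h
  · exfalso
    have H1 := ev 1 (by omega) (by omega) (1 + u) (by
      intro s hs
      have i1 := btFun_cases hu huv 1
      have o3 := btFun_cases o1 o2 s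
      omega)
    have H2 := ev (v + 1) (by omega) (by omega) (v + 1) (by
      intro s hs
      have i1 := btFun_cases hu huv (v + 1)
      have o3 := btFun_cases o1 o2 s
      omega)
    have H3 := ev n (by omega) (by omega) (n + i - j) (by
      intro s hs
      have i1 := btFun_cases hu huv n
      have o3 := btFun_cases o1 o2 s
      omega)
    have d1 := btFun_cases hab hbc 1
    have d2 := btFun_cases hab hbc (v + 1)
    have d3 := btFun_cases hab hbc n
    omega
  · exfalso
    have H1 := ev v (by omega) (by omega) u (by
      intro s hs
      have i1 := btFun_cases hu huv v
      have o3 := btFun_cases o1 o2 s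
      omega)
    have H2 := ev (v + 1) (by omega) (by omega) (v + 1 + n - j) (by
      intro s hs
      have i1 := btFun_cases hu huv (v + 1)
      have o3 := btFun_cases o1 o2 s
      omega)
    have d1 := btFun_cases hab hbc v
    have d2 := btFun_cases hab hbc (v + 1)
    omega
  · exfalso
    have H1 := ev v (by omega) (by omega) u (by
      intro s hs
      have i1 := btFun_cases hu huv v
      have o3 := btFun_cases o1 o2 s
      omega)
    have H2 := ev (v + 1) (by omega) (by omega) (v + 1 + n - j) (by
      intro s hs
      have i1 := btFun_cases hu huv (v + 1)
      have o3 := btFun_cases o1 o2 s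
      omega)
    have d1 := btFun_cases hab hbc v
    have d2 := btFun_cases hab hbc (v + 1)
    omega
  · exfalso
    have H1 := ev 1 (by omega) (by omega) (1 + u + n - j) (by
      intro s hs
      have i1 := btFun_cases hu huv 1
      have o3 := btFun_cases o1 o2 s
      omega)
    have H2 := ev (v + 1) (by omega) (by omega) (v + 1 + n - j) (by
      intro s hs
      have i1 := btFun_cases hu huv (v + 1)
      have o3 := btFun_cases o1 o2 s
      omega)
    have d1 := btFun_cases hab hbc 1
    have d2 := btFun_cases hab hbc (v + 1)
    omega
  · exfalso
    have H1 := ev 1 (by omega) (by omega) (1 + u) (by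
      intro s hs
      have i1 := btFun_cases hu huv 1
      have o3 := btFun_cases o1 o2 s
      omega)
    have H2 := ev (i - u + 1) (by omega) (by omega) (i + 1 + n - j) (by
      intro s hs
      have i1 := btFun_cases hu huv (i - u + 1)
      have o3 := btFun_cases o1 o2 s
      omega)
    have d1 := btFun_cases hab hbc 1
    have d2 := btFun_cases hab hbc (i - u + 1)
    omega
  · exact ⟨h.2, h.1⟩
  · exfalso
    have H1 := ev (i + j - u) (by omega) (by omega) i (by
      intro s hs
      have i1 := btFun_cases hu huv (i + j - u)
      have o3 := btFun_cases o1 o2 s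
      omega)
    have H2 := ev (i + j - u + 1) (by omega) (by omega) (i + 1 + n - j) (by
      intro s hs
      have i1 := btFun_cases hu huv (i + j - u + 1)
      have o3 := btFun_cases o1 o2 s
      omega)
    have H3 := ev n (by omega) (by omega) (n + i - j) (by
      intro s hs
      have i1 := btFun_cases hu huv n
      have o3 := btFun_cases o1 o2 s
      omega)
    have d1 := btFun_cases hab hbc (i + j - u)
    have d2 := btFun_cases hab hbc (i + j - u + 1)
    have d3 := btFun_cases hab hbc n
    omega
  · exfalso
    have H1 := ev (v - u + 1) (by omega) (by omega) 1 (by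
      intro s hs
      have i1 := btFun_cases hu huv (v - u + 1)
      have o3 := btFun_cases o1 o2 s
      omega)
    have H2 := ev n (by omega) (by omega) (n + i - j) (by
      intro s hs
      have i1 := btFun_cases hu huv n
      have o3 := btFun_cases o1 o2 s
      omega)
    have d1 := btFun_cases hab hbc (v - u + 1)
    have d2 := btFun_cases hab hbc n
    omega
  · exfalso
    have hv : ∀ w, (∀ s, btFun 0 u v v = s → btFun i (n - j + i) n s = w) →
        btFun a b c v = w := ev v (by omega) (by omega)
    have H1 := ev (v - u + 1) (by omega) (by omega) 1 (by
      intro s hs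
      have i1 := btFun_cases hu huv (v - u + 1)
      have o3 := btFun_cases o1 o2 s
      omega)
    have H3 := ev n (by omega) (by omega) (n + i - j) (by
      intro s hs
      have i1 := btFun_cases hu huv n
      have o3 := btFun_cases o1 o2 s
      omega)
    have d1 := btFun_cases hab hbc (v - u + 1)
    have d2 := btFun_cases hab hbc n
    have d3 := btFun_cases hab hbc v
    rcases (show (i < u ∧ u ≤ j) ∨ j < u by omega) with h2 | h2
    · have H2 := hv (u + n - j) (by
        intro s hs
        have i1 := btFun_cases hu huv v
        have o3 := btFun_cases o1 o2 s
        omega)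
      omega
    · have H2 := hv (u + i - j) (by
        intro s hs
        have i1 := btFun_cases hu huv v
        have o3 := btFun_cases o1 o2 s
        omega)
      omega
/-- Total version of `blockT` (junk value `1` for invalid parameters). -/
def bt' (n i j k : ℕ) : Equiv.Perm (Fin n) :=
  if h : i < j ∧ j < k ∧ k ≤ n then blockT n i j k h.1 h.2.1 h.2.2 else 1

theorem bt'_eq {n i j k : ℕ} (h1 : i < j) (h2 : j < k) (h3 : k ≤ n) :
    bt' n i j k = blockT n i j k h1 h2 h3 :=
  dif_pos ⟨h1, h2, h3⟩
/-- For `n ≥ 4`, in the block transposition graph `Γ`: every vertex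
in `L ∪ F` has exactly one neighbor in `B`; every vertex in `B` has exactly `n-2`
neighbors in `L ∪ F`; every vertex in `F` has exactly one neighbor in `L`; and every
vertex in `L` has exactly one neighbor in `F`. -/
theorem stmt_12 (n : ℕ) (hn : 4 ≤ n) :
    (∀ σ ∈ Lset n ∪ Fset n,
      {τ | τ ∈ Bset n ∧ σ ≠ τ ∧ σ⁻¹ * τ ∈ blockTranspositions n}.ncard = 1) ∧
    (∀ σ ∈ Bset n,
      {τ | τ ∈ Lset n ∪ Fset n ∧ σ ≠ τ ∧ σ⁻¹ * τ ∈ blockTranspositions n}.ncard = n - 2) ∧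
    (∀ σ ∈ Fset n,
      {τ | τ ∈ Lset n ∧ σ ≠ τ ∧ σ⁻¹ * τ ∈ blockTranspositions n}.ncard = 1) ∧
    (∀ σ ∈ Lset n,
      {τ | τ ∈ Fset n ∧ σ ≠ τ ∧ σ⁻¹ * τ ∈ blockTranspositions n}.ncard = 1) := by
  refine ⟨?_, ?_, ?_, ?_⟩
  · -- every vertex of L ∪ F has exactly one neighbor in B
    rintro σ (⟨u, v, hu, huv, hvn, hvne, rfl⟩ | ⟨p, q, hpq, hqn, hpne, rfl⟩)
    · have hset : {τ | τ ∈ Bset n ∧ blockT n 0 u v hu huv hvn ≠ τ ∧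
          (blockT n 0 u v hu huv hvn)⁻¹ * τ ∈ blockTranspositions n}
          = {blockT n 0 u n hu (by omega) le_rfl} := by
        apply Set.eq_singleton_iff_unique_mem.mpr
        constructor
        · refine ⟨⟨u, hu, by omega, rfl⟩, ?_, ?_⟩
          · intro hEq; exact hvne (blockT_inj hEq).2.2
          · exact adj_of_mul_eq (idE1 hu huv (by omega)) (memT _ _ _)
        · rintro x ⟨⟨m, hm1, hm2, rfl⟩, hne, hadj⟩
          obtain ⟨a, b, c, hab, hbc, hcn, H⟩ :=
            adj_pointwise hu huv hvn hm1 hm2 le_rfl hadj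
          have he : m = u := uniqL hu huv (by omega) hm1 hm2 hab hbc hcn H
          subst he; rfl
      rw [hset]; exact Set.ncard_singleton _
    · have hset : {τ | τ ∈ Bset n ∧ blockT n p q n hpq hqn le_rfl ≠ τ ∧
          (blockT n p q n hpq hqn le_rfl)⁻¹ * τ ∈ blockTranspositions n}
          = {blockT n 0 q n (by omega) hqn le_rfl} := by
        apply Set.eq_singleton_iff_unique_mem.mpr
        constructor
        · refine ⟨⟨q, by omega, hqn, rfl⟩, ?_, ?_⟩
          · intro hEq; exact hpne (blockT_inj hEq).1
          · exact adj_of_mul_eq (idE2 (by omega) hpq hqn) (memT _ _ _)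
        · rintro x ⟨⟨m, hm1, hm2, rfl⟩, hne, hadj⟩
          obtain ⟨a, b, c, hab, hbc, hcn, H⟩ :=
            adj_pointwise hpq hqn le_rfl hm1 hm2 le_rfl hadj
          have he : m = q := uniqF (by omega) hpq hqn hm1 hm2 hab hbc hcn H
          subst he; rfl
      rw [hset]; exact Set.ncard_singleton _
  · -- every vertex of B has exactly n - 2 neighbors in L ∪ F
    rintro σ ⟨u, hu1, hu2, rfl⟩
    have hset : {τ | τ ∈ Lset n ∪ Fset n ∧ blockT n 0 u n hu1 hu2 le_rfl ≠ τ ∧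
        (blockT n 0 u n hu1 hu2 le_rfl)⁻¹ * τ ∈ blockTranspositions n}
        = (fun k => bt' n 0 u k) '' Set.Ioo u n ∪ (fun i => bt' n i u n) '' Set.Ioo 0 u := by
      ext τ
      constructor
      · rintro ⟨hLF, hne, hadj⟩
        rcases hLF with ⟨p, q, hp, hpq, hqn, hqne, rfl⟩ | ⟨p, q, hpq, hqn, hpne, rfl⟩
        · have hadj2 := adjsymm hadj
          obtain ⟨a, b, c, hab, hbc, hcn, H⟩ :=
            adj_pointwise hp hpq hqn hu1 hu2 le_rfl hadj2
          have he : u = p := uniqL hp hpq (by omega) hu1 hu2 hab hbc hcn H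
          left
          subst he
          exact ⟨q, Set.mem_Ioo.mpr ⟨hpq, by omega⟩, bt'_eq hp hpq hqn⟩
        · have hadj2 := adjsymm hadj
          obtain ⟨a, b, c, hab, hbc, hcn, H⟩ :=
            adj_pointwise hpq hqn le_rfl hu1 hu2 le_rfl hadj2
          have he : u = q := uniqF (by omega) hpq hqn hu1 hu2 hab hbc hcn H
          right
          subst he
          exact ⟨p, Set.mem_Ioo.mpr ⟨by omega, hpq⟩, bt'_eq hpq hqn le_rfl⟩
      · rintro (⟨k, hk, rfl⟩ | ⟨p, hp, rfl⟩)
        · rw [Set.mem_Ioo] at hk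
          show bt' n 0 u k ∈ _
          rw [bt'_eq hu1 hk.1 (le_of_lt hk.2)]
          refine ⟨Or.inl ⟨u, k, hu1, hk.1, le_of_lt hk.2, by omega, rfl⟩, ?_, ?_⟩
          · intro hEq; have := (blockT_inj hEq).2.2; omega
          · exact adjsymm (adj_of_mul_eq (idE1 hu1 hk.1 hk.2) (memT _ _ _))
        · rw [Set.mem_Ioo] at hp
          show bt' n p u n ∈ _
          rw [bt'_eq hp.2 hu2 le_rfl]
          refine ⟨Or.inr ⟨p, u, hp.2, hu2, by omega, rfl⟩, ?_, ?_⟩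
          · intro hEq; have := (blockT_inj hEq).1; omega
          · exact adjsymm (adj_of_mul_eq (idE2 hp.1 hp.2 hu2) (memT _ _ _))
    have injA : Set.InjOn (fun k => bt' n 0 u k) (Set.Ioo u n) := by
      intro x hx y hy hxy
      rw [Set.mem_Ioo] at hx hy
      have hxy' : bt' n 0 u x = bt' n 0 u y := hxy
      rw [bt'_eq hu1 hx.1 (le_of_lt hx.2), bt'_eq hu1 hy.1 (le_of_lt hy.2)] at hxy'
      exact (blockT_inj hxy').2.2
    have injB : Set.InjOn (fun i => bt' n i u n) (Set.Ioo 0 u) := by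
      intro x hx y hy hxy
      rw [Set.mem_Ioo] at hx hy
      have hxy' : bt' n x u n = bt' n y u n := hxy
      rw [bt'_eq hx.2 hu2 le_rfl, bt'_eq hy.2 hu2 le_rfl] at hxy'
      exact (blockT_inj hxy').1
    have dis : Disjoint ((fun k => bt' n 0 u k) '' Set.Ioo u n)
        ((fun i => bt' n i u n) '' Set.Ioo 0 u) := by
      rw [Set.disjoint_left]
      rintro x ⟨k, hk, rfl⟩ ⟨p, hp, hEq⟩
      rw [Set.mem_Ioo] at hk hp
      have hEq' : bt' n p u n = bt' n 0 u k := hEq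
      rw [bt'_eq hp.2 hu2 le_rfl, bt'_eq hu1 hk.1 (le_of_lt hk.2)] at hEq'
      have := (blockT_inj hEq').1
      omega
    rw [hset, Set.ncard_union_eq dis ((Set.finite_Ioo _ _).image _)
        ((Set.finite_Ioo _ _).image _),
      Set.ncard_image_of_injOn injA, Set.ncard_image_of_injOn injB,
      ← Finset.coe_Ioo, ← Finset.coe_Ioo, Set.ncard_coe_finset, Set.ncard_coe_finset,
      Nat.card_Ioo, Nat.card_Ioo]
    omega
  · -- every vertex of F has exactly one neighbor in L
    rintro σ ⟨p, q, hpq, hqn, hpne, rfl⟩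
    have hset : {τ | τ ∈ Lset n ∧ blockT n p q n hpq hqn le_rfl ≠ τ ∧
        (blockT n p q n hpq hqn le_rfl)⁻¹ * τ ∈ blockTranspositions n}
        = {blockT n 0 p q (by omega) hpq (by omega)} := by
      apply Set.eq_singleton_iff_unique_mem.mpr
      constructor
      · refine ⟨⟨p, q, by omega, hpq, by omega, by omega, rfl⟩, ?_, ?_⟩
        · intro hEq; exact hpne (blockT_inj hEq).1
        · exact adj_of_mul_eq (idE3 (by omega) hpq hqn) (memT _ _ _)
      · rintro x ⟨⟨w, v, hw, hwv, hvn, hvne, rfl⟩, hne, hadj⟩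
        obtain ⟨a, b, c, hab, hbc, hcn, H⟩ :=
          adj_pointwise hpq hqn le_rfl hw hwv hvn hadj
        obtain ⟨h1, h2⟩ := uniqFL (by omega) hpq hqn hw hwv (by omega) hab hbc hcn H
        subst h1; subst h2; rfl
    rw [hset]; exact Set.ncard_singleton _
  · -- every vertex of L has exactly one neighbor in F
    rintro σ ⟨u, v, hu, huv, hvn, hvne, rfl⟩
    have hset : {τ | τ ∈ Fset n ∧ blockT n 0 u v hu huv hvn ≠ τ ∧
        (blockT n 0 u v hu huv hvn)⁻¹ * τ ∈ blockTranspositions n}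
        = {blockT n u v n huv (by omega) le_rfl} := by
      apply Set.eq_singleton_iff_unique_mem.mpr
      constructor
      · refine ⟨⟨u, v, huv, by omega, by omega, rfl⟩, ?_, ?_⟩
        · intro hEq; have := (blockT_inj hEq).1; omega
        · exact adjsymm (adj_of_mul_eq (idE3 hu huv (by omega)) (memT _ _ _))
      · rintro x ⟨⟨p, q, hpq, hqn2, hpne, rfl⟩, hne, hadj⟩
        have hadj2 := adjsymm hadj
        obtain ⟨a, b, c, hab, hbc, hcn, H⟩ :=
          adj_pointwise hpq hqn2 le_rfl hu huv hvn hadj2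
        obtain ⟨h1, h2⟩ := uniqFL (by omega) hpq hqn2 hu huv (by omega) hab hbc hcn H
        subst h1; subst h2; rfl
    rw [hset]; exact Set.ncard_singleton _
end

section
/- Let n ≥ 5. The subgroup of Sym_n generated by the permutations in V equals the alternating group Alt_n if n is even, and equals the full symmetric group Sym_n if n is odd. -/
/-- The pair `e_m`, `0 ≤ m ≤ n`. -/
def epair (n : ℕ) (hn : 5 ≤ n) (m : ℕ) (hm : m ≤ n) : Set (Equiv.Perm (Fin n)) :=
  if h : m ≤ n - 3 then
    {blockT n m (m + 1) (m + 3) (by omega) (by omega) (by omega),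
     blockT n m (m + 2) (m + 3) (by omega) (by omega) (by omega)}
  else if h2 : m = n - 2 then
    {blockT n 0 (n - 2) (n - 1) (by omega) (by omega) (by omega),
     blockT n 0 (n - 2) n (by omega) (by omega) (by omega)}
  else if h3 : m = n - 1 then
    {blockT n 1 (n - 1) n (by omega) (by omega) (by omega),
     blockT n 0 1 (n - 1) (by omega) (by omega) (by omega)}
  else
    {blockT n 0 2 n (by omega) (by omega) (by omega),
     blockT n 1 2 n (by omega) (by omega) (by omega)}

/-- `V`: the set of the `2(n+1)` endpoints of the pairs `e_0, …, e_n`. -/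
def Vset (n : ℕ) (hn : 5 ≤ n) : Set (Equiv.Perm (Fin n)) :=
  {π | ∃ (m : ℕ) (hm : m ≤ n), π ∈ epair n hn m hm}

section Stmt19Aux

set_option maxHeartbeats 1600000

open Equiv Equiv.Perm Subgroup

variable {n : ℕ}

theorem blockT_apply (i j k : ℕ) (hij : i < j) (hjk : j < k) (hkn : k ≤ n) (t : Fin n) :
    ((blockT n i j k hij hjk hkn t : Fin n) : ℕ) = btFun i j k (t.1 + 1) - 1 := rfl

theorem blockT_inv_apply (i j k : ℕ) (hij : i < j) (hjk : j < k) (hkn : k ≤ n) (t : Fin n) :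
    (((blockT n i j k hij hjk hkn)⁻¹ t : Fin n) : ℕ) = btFun i (k - j + i) k (t.1 + 1) - 1 := rfl

theorem swap_apply_val (a b : ℕ) (ha : a < n) (hb : b < n) (t : Fin n) :
    ((Equiv.swap (⟨a, ha⟩ : Fin n) ⟨b, hb⟩ t : Fin n) : ℕ) =
      if (t : ℕ) = a then b else if (t : ℕ) = b then a else t := by
  rw [Equiv.swap_apply_def]
  split_ifs with h1 h2 <;> simp_all [Fin.ext_iff]

/-- `c a = (a, a+1, a+2)` (0-based) as a product of two adjacent swaps. -/
theorem c_eq_swaps (a : ℕ) (h : a + 3 ≤ n) (p1 p2) :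
    blockT n a (a+1) (a+3) p1 p2 h =
      Equiv.swap ⟨a, by omega⟩ ⟨a+1, by omega⟩ * Equiv.swap ⟨a+1, by omega⟩ ⟨a+2, by omega⟩ := by
  apply Equiv.ext; intro t
  have ht := t.isLt
  apply Fin.ext
  simp only [Equiv.Perm.mul_apply, blockT_apply, swap_apply_val]
  unfold btFun
  split_ifs <;> (try contradiction) <;> omega

theorem cinv_eq (a : ℕ) (h : a + 3 ≤ n) (p1 p2 q1 q2 q3) :
    blockT n a (a+2) (a+3) p1 p2 h = (blockT n a (a+1) (a+3) q1 q2 q3)⁻¹ := by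
  apply Equiv.ext; intro t
  have ht := t.isLt
  apply Fin.ext
  simp only [blockT_apply, blockT_inv_apply]
  unfold btFun
  split_ifs <;> (try contradiction) <;> omega

theorem sign_c (a : ℕ) (h : a + 3 ≤ n) (p1 p2) :
    Equiv.Perm.sign (blockT n a (a+1) (a+3) p1 p2 h) = 1 := by
  rw [c_eq_swaps a h, map_mul, Equiv.Perm.sign_swap (by simp [Fin.ext_iff]),
    Equiv.Perm.sign_swap (by simp [Fin.ext_iff])]
  decide

theorem blockT_01_eq_cycleRange (hn : 5 ≤ n) (p1 p2 p3) :
    blockT n 0 1 (n-1) p1 p2 p3 = Fin.cycleRange (⟨n-2, by omega⟩ : Fin n) := by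
  apply Equiv.ext; intro t
  have ht := t.isLt
  obtain ⟨m, rfl⟩ : ∃ m, n = m + 1 := ⟨n-1, by omega⟩
  apply Fin.ext
  rcases lt_trichotomy (t : ℕ) (m + 1 - 2) with h | h | h
  · rw [Fin.coe_cycleRange_of_lt (by simpa [Fin.lt_def] using h), blockT_apply]
    unfold btFun; split_ifs <;> (try contradiction) <;> omega
  · rw [Fin.cycleRange_of_eq (by simp [Fin.ext_iff, h]), blockT_apply]
    unfold btFun; split_ifs <;> simp <;> omega
  · rw [Fin.cycleRange_of_gt (by simpa [Fin.lt_def] using h), blockT_apply]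
    unfold btFun; split_ifs <;> (try contradiction) <;> omega

theorem rho_eq_inv (hn : 5 ≤ n) (p1 p2 p3 q1 q2 q3) :
    blockT n 0 (n-2) (n-1) p1 p2 p3 = (blockT n 0 1 (n-1) q1 q2 q3)⁻¹ := by
  apply Equiv.ext; intro t
  have ht := t.isLt
  apply Fin.ext
  simp only [blockT_apply, blockT_inv_apply]
  unfold btFun
  split_ifs <;> (try contradiction) <;> omega

theorem sign_rho (hn : 5 ≤ n) (p1 p2 p3) :
    Equiv.Perm.sign (blockT n 0 (n-2) (n-1) p1 p2 p3) = (-1) ^ n := by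
  rw [rho_eq_inv hn p1 p2 p3 (by omega) (by omega) (by omega), map_inv,
    blockT_01_eq_cycleRange hn, Fin.sign_cycleRange]
  have h1 : ((-1 : ℤˣ) ^ (n - 2))⁻¹ = (-1) ^ (n - 2) := by
    rw [← inv_pow, show ((-1 : ℤˣ))⁻¹ = -1 by decide]
  have h2 : ((-1 : ℤˣ)) ^ (n - 2) = (-1) ^ n := by
    conv_rhs => rw [show n = n - 2 + 2 by omega]
    rw [pow_add, show ((-1 : ℤˣ)) ^ 2 = 1 by decide, mul_one]
  rw [h1, h2]

theorem qsq (hn : 5 ≤ n) (p1 p2 p3) :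
    blockT n 0 (n-2) n p1 p2 p3 =
      blockT n 0 (n-1) n (by omega) (by omega) le_rfl *
      blockT n 0 (n-1) n (by omega) (by omega) le_rfl := by
  apply Equiv.ext; intro t
  have ht := t.isLt
  apply Fin.ext
  simp only [Equiv.Perm.mul_apply, blockT_apply]
  have h1 := btFun_lb (i := 0) (j := n-1) (k := n) (t := t.1 + 1) (by omega)
  unfold btFun
  split_ifs <;> (try contradiction) <;> omega

theorem sign_e2b (hn : 5 ≤ n) (p1 p2 p3) :
    Equiv.Perm.sign (blockT n 0 (n-2) n p1 p2 p3) = 1 := by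
  rw [qsq hn p1 p2 p3, map_mul]
  rcases Int.units_eq_one_or
      (Equiv.Perm.sign (blockT n 0 (n-1) n (by omega) (by omega) le_rfl)) with h | h <;>
    rw [h] <;> decide

theorem e_n_a_eq (hn : 5 ≤ n) (p1 p2 p3) :
    blockT n 0 2 n p1 p2 p3 = (blockT n 0 (n-2) n (by omega) (by omega) le_rfl)⁻¹ := by
  apply Equiv.ext; intro t
  have ht := t.isLt
  apply Fin.ext
  simp only [blockT_apply, blockT_inv_apply]
  unfold btFun
  split_ifs <;> (try contradiction) <;> omega

theorem sign_e_n_a (hn : 5 ≤ n) (p1 p2 p3) :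
    Equiv.Perm.sign (blockT n 0 2 n p1 p2 p3) = 1 := by
  rw [e_n_a_eq hn p1 p2 p3, map_inv, sign_e2b hn]
  decide

theorem e1a_eq (hn : 5 ≤ n) (p1 p2 p3) :
    blockT n 1 (n-1) n p1 p2 p3 =
      Equiv.swap ⟨0, by omega⟩ ⟨n-1, by omega⟩ * Equiv.swap ⟨n-1, by omega⟩ ⟨n-2, by omega⟩ *
        blockT n 0 (n-2) (n-1) (by omega) (by omega) (by omega) := by
  apply Equiv.ext; intro t
  have ht := t.isLt
  apply Fin.ext
  simp only [Equiv.Perm.mul_apply, blockT_apply, swap_apply_val]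
  have h1 := btFun_lb (i := 0) (j := n-2) (k := n-1) (t := t.1 + 1) (by omega)
  have h2 := btFun_ub (i := 0) (j := n-2) (k := n-1) (t := t.1 + 1) (n := n)
    (by omega) (by omega) (by omega)
  unfold btFun
  split_ifs <;> (try contradiction) <;> omega

theorem sign_e1a (hn : 5 ≤ n) (p1 p2 p3) :
    Equiv.Perm.sign (blockT n 1 (n-1) n p1 p2 p3) = (-1) ^ n := by
  rw [e1a_eq hn p1 p2 p3, map_mul, map_mul,
    Equiv.Perm.sign_swap (by simp [Fin.ext_iff]; omega),
    Equiv.Perm.sign_swap (by simp [Fin.ext_iff]; omega),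
    sign_rho hn]
  rw [show ((-1 : ℤˣ)) * -1 = 1 by decide, one_mul]

theorem e_n_b_eq (hn : 5 ≤ n) (p1 p2 p3) :
    blockT n 1 2 n p1 p2 p3 = (blockT n 1 (n-1) n (by omega) (by omega) le_rfl)⁻¹ := by
  apply Equiv.ext; intro t
  have ht := t.isLt
  apply Fin.ext
  simp only [blockT_apply, blockT_inv_apply]
  unfold btFun
  split_ifs <;> (try contradiction) <;> omega

theorem sign_e_n_b (hn : 5 ≤ n) (p1 p2 p3) :
    Equiv.Perm.sign (blockT n 1 2 n p1 p2 p3) = (-1) ^ n := by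
  rw [e_n_b_eq hn p1 p2 p3, map_inv, sign_e1a hn, ← inv_pow,
    show ((-1 : ℤˣ))⁻¹ = -1 by decide]

theorem sign_e1b (hn : 5 ≤ n) (p1 p2 p3) :
    Equiv.Perm.sign (blockT n 0 1 (n-1) p1 p2 p3) = (-1) ^ n := by
  rw [blockT_01_eq_cycleRange hn, Fin.sign_cycleRange]
  show ((-1 : ℤˣ)) ^ (n - 2) = (-1) ^ n
  conv_rhs => rw [show n = n - 2 + 2 by omega]
  rw [pow_add, show ((-1 : ℤˣ)) ^ 2 = 1 by decide, mul_one]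

/-- The set of consecutive three-cycles. -/
def Cset (n : ℕ) : Set (Equiv.Perm (Fin n)) :=
  {π | ∃ (a : ℕ) (h : a + 3 ≤ n), blockT n a (a+1) (a+3) (by omega) (by omega) h = π}

theorem c_mem_Cset (a : ℕ) (h : a + 3 ≤ n) (p1 p2) :
    blockT n a (a+1) (a+3) p1 p2 h ∈ Cset n := ⟨a, h, rfl⟩

theorem Cset_subset_V (hn : 5 ≤ n) : Cset n ⊆ Vset n hn := by
  rintro π ⟨a, h, rfl⟩
  refine ⟨a, by omega, ?_⟩
  unfold epair
  rw [dif_pos (show a ≤ n - 3 by omega)]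
  left; rfl

theorem Cset_le_alternating : Subgroup.closure (Cset n) ≤ alternatingGroup (Fin n) := by
  rw [Subgroup.closure_le]
  rintro π ⟨a, h, rfl⟩
  exact Equiv.Perm.mem_alternatingGroup.mpr (sign_c a h _ _)

/- conjugation of the generators by `s₀ = swap 0 1` -/
theorem conj_c0 (hn : 5 ≤ n) (p1 p2 p3) :
    Equiv.swap (⟨0, by omega⟩ : Fin n) ⟨1, by omega⟩ * blockT n 0 1 3 p1 p2 p3 *
        Equiv.swap (⟨0, by omega⟩ : Fin n) ⟨1, by omega⟩ =
      (blockT n 0 1 3 p1 p2 p3)⁻¹ := by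
  apply Equiv.ext; intro t
  have ht := t.isLt
  apply Fin.ext
  simp only [Equiv.Perm.mul_apply, blockT_apply, blockT_inv_apply, swap_apply_val]
  have h1 := btFun_lb (i := 0) (j := 1) (k := 3)
    (t := (if (t : ℕ) = 0 then 1 else if (t : ℕ) = 1 then 0 else (t : ℕ)) + 1) (by omega)
  unfold btFun
  split_ifs <;> (try contradiction) <;> omega

theorem conj_c1 (hn : 5 ≤ n) (p1 p2 p3) :
    Equiv.swap (⟨0, by omega⟩ : Fin n) ⟨1, by omega⟩ * blockT n 1 2 4 p1 p2 p3 *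
        Equiv.swap (⟨0, by omega⟩ : Fin n) ⟨1, by omega⟩ =
      (blockT n 0 1 3 (by omega) (by omega) (by omega))⁻¹ *
        blockT n 1 2 4 (by omega) (by omega) (by omega) := by
  apply Equiv.ext; intro t
  have ht := t.isLt
  apply Fin.ext
  simp only [Equiv.Perm.mul_apply, blockT_apply, blockT_inv_apply, swap_apply_val]
  have h1 := btFun_lb (i := 1) (j := 2) (k := 4) (t := t.1 + 1) (by omega)
  have h2 := btFun_ub (i := 1) (j := 2) (k := 4) (t := t.1 + 1) (n := n)
    (by omega) (by omega) (by omega)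
  unfold btFun
  split_ifs <;> (try contradiction) <;> omega

theorem conj_c_ge (a : ℕ) (ha : 2 ≤ a) (h : a + 3 ≤ n) (p1 p2) :
    Equiv.swap (⟨0, by omega⟩ : Fin n) ⟨1, by omega⟩ * blockT n a (a+1) (a+3) p1 p2 h *
        Equiv.swap (⟨0, by omega⟩ : Fin n) ⟨1, by omega⟩ =
      blockT n a (a+1) (a+3) p1 p2 h := by
  apply Equiv.ext; intro t
  have ht := t.isLt
  apply Fin.ext
  simp only [Equiv.Perm.mul_apply, blockT_apply, swap_apply_val]
  unfold btFun
  split_ifs <;> (try contradiction) <;> omega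

/-- conjugation by `s₀` preserves `closure (Cset n)`. -/
theorem conj_mem (hn : 5 ≤ n) {x : Equiv.Perm (Fin n)} (hx : x ∈ Subgroup.closure (Cset n)) :
    Equiv.swap (⟨0, by omega⟩ : Fin n) ⟨1, by omega⟩ * x *
      Equiv.swap (⟨0, by omega⟩ : Fin n) ⟨1, by omega⟩ ∈ Subgroup.closure (Cset n) := by
  set s : Equiv.Perm (Fin n) := Equiv.swap ⟨0, by omega⟩ ⟨1, by omega⟩ with hs
  have hss : s * s = 1 := Equiv.swap_mul_self _ _
  induction hx using Subgroup.closure_induction with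
  | mem π hπ =>
      obtain ⟨a, h, rfl⟩ := hπ
      rcases Nat.lt_or_ge a 2 with ha | ha
      · interval_cases a
        · rw [conj_c0 hn]
          exact inv_mem (Subgroup.subset_closure (c_mem_Cset 0 (by omega) _ _))
        · rw [conj_c1 hn]
          exact mul_mem
            (inv_mem (Subgroup.subset_closure (c_mem_Cset 0 (by omega) _ _)))
            (Subgroup.subset_closure (c_mem_Cset 1 (by omega) _ _))
      · rw [conj_c_ge a ha h]
        exact Subgroup.subset_closure (c_mem_Cset a h _ _)
  | one =>
      rw [mul_one, hss]
      exact Subgroup.one_mem _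
  | mul x y _ _ hx hy =>
      have h := mul_mem hx hy
      simp only [mul_assoc] at h ⊢
      rwa [show s * (s * (y * s)) = y * s by rw [← mul_assoc s s, hss, one_mul]] at h
  | inv x _ hx =>
      have h := inv_mem hx
      rwa [mul_inv_rev, mul_inv_rev, show s⁻¹ = s from Equiv.swap_inv _ _, ← mul_assoc] at h
      

/-- adjacent swaps lie in `closure (insert s₀ (Cset n))`. -/
theorem adj_swap_mem (hn : 5 ≤ n) (a : ℕ) (h : a + 2 ≤ n) :
    Equiv.swap (⟨a, by omega⟩ : Fin n) ⟨a+1, by omega⟩ ∈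
      Subgroup.closure
        (insert (Equiv.swap (⟨0, by omega⟩ : Fin n) ⟨1, by omega⟩) (Cset n)) := by
  induction a with
  | zero => exact Subgroup.subset_closure (Set.mem_insert _ _)
  | succ a ih =>
      have h3 : a + 3 ≤ n := by omega
      have hc : blockT n a (a+1) (a+3) (by omega) (by omega) h3 ∈
          Subgroup.closure
            (insert (Equiv.swap (⟨0, by omega⟩ : Fin n) ⟨1, by omega⟩) (Cset n)) :=
        Subgroup.subset_closure (Set.mem_insert_of_mem _ (c_mem_Cset a h3 _ _))
      have ha := ih (by omega)
      have key : Equiv.swap (⟨a+1, by omega⟩ : Fin n) ⟨a+1+1, by omega⟩ =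
          Equiv.swap (⟨a, by omega⟩ : Fin n) ⟨a+1, by omega⟩ *
            blockT n a (a+1) (a+3) (by omega) (by omega) h3 := by
        rw [c_eq_swaps a h3, ← mul_assoc, Equiv.swap_mul_self, one_mul]
      rw [key]
      exact mul_mem ha hc

theorem swap_mem (hn : 5 ≤ n) (d : ℕ) : ∀ (a : ℕ) (h : a + d + 1 < n),
    Equiv.swap (⟨a, by omega⟩ : Fin n) ⟨a + d + 1, by omega⟩ ∈
      Subgroup.closure
        (insert (Equiv.swap (⟨0, by omega⟩ : Fin n) ⟨1, by omega⟩) (Cset n)) := by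
  induction d with
  | zero => exact fun a h => adj_swap_mem hn a (by omega)
  | succ d ih =>
      intro a h
      have hadj := adj_swap_mem hn (a + d + 1) (by omega)
      have hih := ih a (by omega)
      have key : Equiv.swap (⟨a, by omega⟩ : Fin n) ⟨a + (d+1) + 1, by omega⟩ =
          Equiv.swap (⟨a+d+1, by omega⟩ : Fin n) ⟨a+d+2, by omega⟩ *
            Equiv.swap (⟨a, by omega⟩ : Fin n) ⟨a+d+1, by omega⟩ *
            Equiv.swap (⟨a+d+1, by omega⟩ : Fin n) ⟨a+d+2, by omega⟩ := by
        apply Equiv.ext; intro t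
        have ht := t.isLt
        apply Fin.ext
        simp only [Equiv.Perm.mul_apply, swap_apply_val]
        split_ifs <;> (try contradiction) <;> omega
      rw [key]
      exact mul_mem (mul_mem hadj hih) hadj

theorem swap_mem_of_lt (hn : 5 ≤ n) (u v : Fin n) (hlt : (u : ℕ) < (v : ℕ)) :
    Equiv.swap u v ∈ Subgroup.closure
        (insert (Equiv.swap (⟨0, by omega⟩ : Fin n) ⟨1, by omega⟩) (Cset n)) := by
  have hv := v.isLt
  have key : v = (⟨(u : ℕ) + ((v : ℕ) - (u : ℕ) - 1) + 1, by omega⟩ : Fin n) :=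
    Fin.ext (by simp; omega)
  rw [key]
  exact swap_mem hn ((v : ℕ) - (u : ℕ) - 1) (u : ℕ) (by omega)

theorem closure_insert_top (hn : 5 ≤ n) :
    Subgroup.closure
        (insert (Equiv.swap (⟨0, by omega⟩ : Fin n) ⟨1, by omega⟩) (Cset n)) = ⊤ := by
  rw [eq_top_iff, ← Equiv.Perm.closure_isSwap, Subgroup.closure_le]
  rintro π ⟨x, y, hxy, rfl⟩
  have hxy' : (x : ℕ) ≠ (y : ℕ) := fun e => hxy (Fin.ext e)
  rcases Nat.lt_or_ge (x : ℕ) (y : ℕ) with hlt | hge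
  · exact swap_mem_of_lt hn x y hlt
  · rw [Equiv.swap_comm x y]
    exact swap_mem_of_lt hn y x (by omega)

/-- The alternating group is contained in the closure of the consecutive 3-cycles. -/
theorem alt_le_closure_Cset (hn : 5 ≤ n) :
    alternatingGroup (Fin n) ≤ Subgroup.closure (Cset n) := by
  intro σ hσ
  set s : Equiv.Perm (Fin n) := Equiv.swap ⟨0, by omega⟩ ⟨1, by omega⟩ with hs
  have hss : s * s = 1 := Equiv.swap_mul_self _ _
  have hσ' : σ ∈ Subgroup.closure (insert s (Cset n)) := by
    rw [hs, closure_insert_top hn]; trivial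
  have main : σ ∈ Subgroup.closure (Cset n) ∨ s * σ ∈ Subgroup.closure (Cset n) := by
    clear hσ
    induction hσ' using Subgroup.closure_induction with
    | mem π hπ =>
        rcases hπ with rfl | hπ
        · right; rw [hss]; exact Subgroup.one_mem _
        · left; exact Subgroup.subset_closure hπ
    | one => left; exact Subgroup.one_mem _
    | mul x y _ _ hx hy =>
        rcases hx with hx | hx <;> rcases hy with hy | hy
        · left; exact mul_mem hx hy
        · right
          have h := mul_mem (conj_mem hn hx) hy
          rw [← hs] at h
          simp only [mul_assoc] at h ⊢
          rwa [show s * (s * y) = y by rw [← mul_assoc, hss, one_mul]] at h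
        · right
          have h := mul_mem hx hy
          rwa [mul_assoc] at h
        · left
          have h := mul_mem (conj_mem hn hx) hy
          rw [← hs] at h
          simp only [mul_assoc] at h
          rw [show s * (s * y) = y by rw [← mul_assoc, hss, one_mul]] at h
          rwa [show s * (s * (x * y)) = x * y by rw [← mul_assoc, hss, one_mul]] at h
    | inv x _ hx =>
        rcases hx with hx | hx
        · left; exact inv_mem hx
        · right
          have h := inv_mem (conj_mem hn hx)
          rw [← hs] at h
          rwa [show s * (s * x) * s = x * s by rw [← mul_assoc s s x, hss, one_mul],
            mul_inv_rev, show s⁻¹ = s from Equiv.swap_inv _ _] at h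
  rcases main with h | h
  · exact h
  · exfalso
    have h1 : Equiv.Perm.sign (s * σ) = 1 :=
      Equiv.Perm.mem_alternatingGroup.mp (Cset_le_alternating h)
    rw [map_mul, hs, Equiv.Perm.sign_swap (by simp [Fin.ext_iff]),
      Equiv.Perm.mem_alternatingGroup.mp hσ] at h1
    exact absurd h1 (by decide)

theorem V_subset_alternating (hn : 5 ≤ n) (he : Even n) :
    Vset n hn ⊆ (alternatingGroup (Fin n) : Set (Equiv.Perm (Fin n))) := by
  have hpow : ((-1 : ℤˣ) ^ n) = 1 := Even.neg_one_pow he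
  rintro π ⟨m, hm, hπ⟩
  unfold epair at hπ
  split_ifs at hπ with h1 h2 h3 <;>
    simp only [Set.mem_insert_iff, Set.mem_singleton_iff] at hπ <;>
    rcases hπ with rfl | rfl
  · exact Equiv.Perm.mem_alternatingGroup.mpr (sign_c m (by omega) _ _)
  · rw [cinv_eq m (by omega) (by omega) (by omega) (by omega) (by omega) (by omega)]
    exact inv_mem (Equiv.Perm.mem_alternatingGroup.mpr (sign_c m (by omega) _ _))
  · exact Equiv.Perm.mem_alternatingGroup.mpr ((sign_rho hn _ _ _).trans hpow)
  · exact Equiv.Perm.mem_alternatingGroup.mpr (sign_e2b hn _ _ _)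
  · exact Equiv.Perm.mem_alternatingGroup.mpr ((sign_e1a hn _ _ _).trans hpow)
  · exact Equiv.Perm.mem_alternatingGroup.mpr ((sign_e1b hn _ _ _).trans hpow)
  · exact Equiv.Perm.mem_alternatingGroup.mpr (sign_e_n_a hn _ _ _)
  · exact Equiv.Perm.mem_alternatingGroup.mpr ((sign_e_n_b hn _ _ _).trans hpow)

theorem rho_mem_V (hn : 5 ≤ n) :
    blockT n 0 (n-2) (n-1) (by omega) (by omega) (by omega) ∈ Vset n hn := by
  refine ⟨n - 2, by omega, ?_⟩
  unfold epair
  rw [dif_neg (by omega), dif_pos rfl]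
  left; rfl

end Stmt19Aux


/-- For `n ≥ 5`, the subgroup of `Sym_n` generated by the
permutations in `V` is `Alt_n` if `n` is even and `Sym_n` if `n` is odd. -/
theorem stmt_19 (n : ℕ) (hn : 5 ≤ n) :
    (Even n → Subgroup.closure (Vset n hn) = alternatingGroup (Fin n)) ∧
    (Odd n → Subgroup.closure (Vset n hn) = ⊤) := by
  have hAlt : alternatingGroup (Fin n) ≤ Subgroup.closure (Vset n hn) :=
    le_trans (alt_le_closure_Cset hn) (Subgroup.closure_mono (Cset_subset_V hn))
  constructor
  · intro he
    refine le_antisymm ?_ hAlt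
    rw [Subgroup.closure_le]
    exact V_subset_alternating hn he
  · intro ho
    rw [eq_top_iff]
    intro σ _
    rcases Int.units_eq_one_or (Equiv.Perm.sign σ) with h | h
    · exact hAlt (Equiv.Perm.mem_alternatingGroup.mpr h)
    · have hρ : blockT n 0 (n-2) (n-1) (by omega) (by omega) (by omega) ∈
          Subgroup.closure (Vset n hn) := Subgroup.subset_closure (rho_mem_V hn)
      have h2 : σ * (blockT n 0 (n-2) (n-1) (by omega) (by omega) (by omega))⁻¹ ∈
          alternatingGroup (Fin n) := by
        rw [Equiv.Perm.mem_alternatingGroup, map_mul, map_inv, sign_rho hn, h,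
          Odd.neg_one_pow ho]
        decide
      have hfin := mul_mem (hAlt h2) hρ
      rwa [inv_mul_cancel_right] at hfin
end
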